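/- Let H be a real Hilbert space, f : H → ℝ, let λ_n > 0 be stepsizes with Σ λ_n = ∞, and let (z_n)_{n≥0} be a sequence in H with z_{n+1} = z_n + λ_n w_n, where for every n and every y ∈ H, f(y) ≥ f(z_n) + ⟨−w_n, y − z_n⟩ (i.e., −w_n is a subgradient of f at z_n, so (z_n) is an Euler/explicit subgradient sequence). If either Σ ‖z_{n+1} − z_n‖² < ∞ or λ_n‖w_n‖² → 0, then liminf_{n→∞} f(z_n) ≤ f(y) for every y ∈ H, i.e., liminf_{n→∞} f(z_n) = inf f. -/

import Mathlib

open RealInnerProductSpace Filter Topology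

/-- Discrete Gronwall-type accumulation lemma. -/
lemma stmt12_aux (a c : ℕ → ℝ) (n0 : ℕ) (h : ∀ n, n0 ≤ n → a (n + 1) ≤ a n + c n) :
    ∀ N, n0 ≤ N → a N ≤ a n0 + ∑ k ∈ Finset.Ico n0 N, c k := by
  intro N hN
  induction N with
  | zero =>
    simp [Nat.le_zero.mp hN]
  | succ n ih =>
    rcases eq_or_lt_of_le hN with h1 | h1
    · simp [← h1]
    · have hn : n0 ≤ n := Nat.lt_succ_iff.mp h1
      have := h n hn
      have := ih hn
      rw [Finset.sum_Ico_succ_top hn]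
      linarith

/-- for an explicit (Euler) subgradient sequence `z_{n+1} = z_n + λ_n w_n`
with `−w_n ∈ ∂f(z_n)` and `Σ λ_n = ∞`, if either `Σ ‖z_{n+1} − z_n‖² < ∞` or
`λ_n ‖w_n‖² → 0`, then `liminf f(z_n) ≤ f(y)` for every `y`, i.e. `liminf f(z_n) = inf f`. -/
theorem stmt12 {H : Type*} [NormedAddCommGroup H] [InnerProductSpace ℝ H] [CompleteSpace H]
    (f : H → ℝ) (lam : ℕ → ℝ) (hlam : ∀ n, 0 < lam n)
    (hdiv : ¬ Summable lam)
    (z w : ℕ → H)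
    (hrec : ∀ n, z (n + 1) = z n + lam n • w n)
    (hsub : ∀ (n : ℕ) (y : H), f y ≥ f (z n) + ⟪-(w n), y - z n⟫)
    (hcond : (Summable fun n => ‖z (n + 1) - z n‖ ^ 2) ∨
      Tendsto (fun n => lam n * ‖w n‖ ^ 2) atTop (𝓝 0)) :
    ∀ y : H, Filter.liminf (fun n => (f (z n) : EReal)) atTop ≤ (f y : EReal) := by
  intro y
  by_contra hlt
  push_neg at hlt
  obtain ⟨r, hr1, hr2⟩ := EReal.exists_between_coe_real hlt
  set ε : ℝ := r - f y with hεdef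
  have hεpos : 0 < ε := by
    have : f y < r := by exact_mod_cast hr1
    simp only [hεdef]; linarith
  have hev : ∀ᶠ n in atTop, (r : EReal) < (f (z n) : EReal) :=
    Filter.eventually_lt_of_lt_liminf hr2
  rw [Filter.eventually_atTop] at hev
  obtain ⟨n0, hn0⟩ := hev
  -- key one-step estimate
  have hkey : ∀ n, n0 ≤ n →
      ‖z (n + 1) - y‖ ^ 2 ≤ ‖z n - y‖ ^ 2 - 2 * ε * lam n + ‖z (n + 1) - z n‖ ^ 2 := by
    intro n hn
    have hfr : r < f (z n) := by exact_mod_cast hn0 n hn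
    have hg : ε ≤ ⟪w n, y - z n⟫ := by
      have := hsub n y
      rw [inner_neg_left] at this
      simp only [hεdef]; linarith
    have hz1 : z (n + 1) - y = (z n - y) + lam n • w n := by
      rw [hrec n]; abel
    have hz2 : z (n + 1) - z n = lam n • w n := by
      rw [hrec n]; abel
    rw [hz1, hz2, norm_add_sq_real]
    have hinner : ⟪z n - y, lam n • w n⟫ = lam n * ⟪w n, z n - y⟫ := by
      rw [real_inner_smul_right, real_inner_comm]
    have hflip : ⟪w n, z n - y⟫ = -⟪w n, y - z n⟫ := by
      rw [← inner_neg_right]; congr 1; abel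
    have h1 : ⟪z n - y, lam n • w n⟫ ≤ -(lam n * ε) := by
      rw [hinner, hflip]
      have := mul_le_mul_of_nonneg_left hg (le_of_lt (hlam n))
      linarith
    nlinarith [hlam n]
  -- in both cases, partial sums of lam from some index are bounded
  have hbound : ∃ n1 C, ∀ N, n1 ≤ N → ∑ k ∈ Finset.Ico n1 N, lam k ≤ C := by
    rcases hcond with hsum | hT
    · refine ⟨n0, (‖z n0 - y‖ ^ 2 + ∑' k, ‖z (k + 1) - z k‖ ^ 2) / (2 * ε), ?_⟩
      intro N hN
      have haux := stmt12_aux (fun n => ‖z n - y‖ ^ 2)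
        (fun n => ‖z (n + 1) - z n‖ ^ 2 - 2 * ε * lam n) n0
        (fun n hn => by have := hkey n hn; simpa using by linarith) N hN
      simp only [Finset.sum_sub_distrib] at haux
      have hs : ∑ k ∈ Finset.Ico n0 N, ‖z (k + 1) - z k‖ ^ 2 ≤
          ∑' k, ‖z (k + 1) - z k‖ ^ 2 :=
        Summable.sum_le_tsum _ (fun i _ => by positivity) hsum
      have hnn : (0:ℝ) ≤ ‖z N - y‖ ^ 2 := by positivity
      rw [le_div_iff₀ (by linarith : (0:ℝ) < 2 * ε)]
      have heq : ∑ k ∈ Finset.Ico n0 N, 2 * ε * lam k =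
          2 * ε * ∑ k ∈ Finset.Ico n0 N, lam k := (Finset.mul_sum _ _ _).symm
      rw [heq] at haux
      linarith [mul_comm (∑ k ∈ Finset.Ico n0 N, lam k) (2 * ε)]
    · have hev2 : ∀ᶠ n in atTop, lam n * ‖w n‖ ^ 2 < ε := hT.eventually_lt_const hεpos
      rw [Filter.eventually_atTop] at hev2
      obtain ⟨n2, hn2⟩ := hev2
      set n1 := max n0 n2 with hn1def
      refine ⟨n1, ‖z n1 - y‖ ^ 2 / ε, ?_⟩
      intro N hN
      have haux := stmt12_aux (fun n => ‖z n - y‖ ^ 2) (fun n => -(ε * lam n)) n1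
        (fun n hn => by
          have h1 := hkey n (le_trans (le_max_left _ _) hn)
          have h2 := hn2 n (le_trans (le_max_right _ _) hn)
          have hz2 : z (n + 1) - z n = lam n • w n := by rw [hrec n]; abel
          have hsq : ‖z (n + 1) - z n‖ ^ 2 = lam n * (lam n * ‖w n‖ ^ 2) := by
            rw [hz2, norm_smul, Real.norm_eq_abs, abs_of_pos (hlam n)]; ring
          have h3 : ‖z (n + 1) - z n‖ ^ 2 ≤ lam n * ε :=
            hsq ▸ mul_le_mul_of_nonneg_left (le_of_lt h2) (le_of_lt (hlam n))
          nlinarith [hlam n]) N hN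
      have hnn : (0:ℝ) ≤ ‖z N - y‖ ^ 2 := by positivity
      have hsum : ∑ k ∈ Finset.Ico n1 N, -(ε * lam k) =
          -(ε * ∑ k ∈ Finset.Ico n1 N, lam k) := by
        rw [Finset.sum_neg_distrib, Finset.mul_sum]
      rw [hsum] at haux
      rw [le_div_iff₀ hεpos]
      linarith [mul_comm (∑ k ∈ Finset.Ico n1 N, lam k) ε]
  obtain ⟨n1, C, hC⟩ := hbound
  apply hdiv
  apply summable_of_sum_range_le (c := ∑ k ∈ Finset.range n1, lam k + C)
    (fun n => le_of_lt (hlam n))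
  intro N
  have hC0 : 0 ≤ C := by simpa using hC n1 le_rfl
  rcases le_or_gt n1 N with h | h
  · have : ∑ k ∈ Finset.range N, lam k =
        ∑ k ∈ Finset.range n1, lam k + ∑ k ∈ Finset.Ico n1 N, lam k := by
      rw [Finset.range_eq_Ico,
        ← Finset.sum_Ico_consecutive _ (Nat.zero_le n1) h, ← Finset.range_eq_Ico]
    rw [this]
    linarith [hC N h]
  · have : ∑ k ∈ Finset.range N, lam k ≤ ∑ k ∈ Finset.range n1, lam k :=
      Finset.sum_le_sum_of_subset_of_nonneg
        (Finset.range_subset_range.mpr (le_of_lt h)) (fun i _ _ => le_of_lt (hlam i))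
    linarith
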